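/- Let n be a positive integer, let A and B be n×n complex matrices, and let σ > 0 be a real number. Set M = [[A, (1/σ)B], [−B, A]] (a 2n×2n block matrix) and M̄ = [[A + (i/√σ)B, 0], [0, A − (i/√σ)B]]. Then the block matrix X = [[I, I], [i√σ I, −i√σ I]] is invertible and satisfies M·X = X·M̄; in particular M is similar to M̄. -/
import Mathlib

theorem stmt0 (n : ℕ) (A B : Matrix (Fin n) (Fin n) ℂ) (σ : ℝ) (hσ : 0 < σ)
    (M Mbar X : Matrix (Fin n ⊕ Fin n) (Fin n ⊕ Fin n) ℂ)
    (hM : M = Matrix.fromBlocks A ((1 / (σ : ℂ)) • B) (-B) A)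
    (hMbar : Mbar = Matrix.fromBlocks (A + (Complex.I / (Real.sqrt σ : ℂ)) • B) 0 0
        (A - (Complex.I / (Real.sqrt σ : ℂ)) • B))
    (hX : X = Matrix.fromBlocks (1 : Matrix (Fin n) (Fin n) ℂ) 1
        ((Complex.I * (Real.sqrt σ : ℂ)) • 1) (-((Complex.I * (Real.sqrt σ : ℂ)) • 1))) :
    IsUnit X ∧ M * X = X * Mbar := by
  have hs : (Real.sqrt σ : ℂ) ≠ 0 :=
    Complex.ofReal_ne_zero.mpr (Real.sqrt_pos.mpr hσ).ne'
  have hsq : (Real.sqrt σ : ℂ) * (Real.sqrt σ : ℂ) = (σ : ℂ) := by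
    norm_cast; exact Real.mul_self_sqrt hσ.le
  have hσC : (σ : ℂ) ≠ 0 := Complex.ofReal_ne_zero.mpr hσ.ne'
  have hI := Complex.I_ne_zero
  set c : ℂ := Complex.I * (Real.sqrt σ : ℂ) with hc
  have hcne : c ≠ 0 := mul_ne_zero hI hs
  constructor
  · have h1 : X * Matrix.fromBlocks ((2⁻¹ : ℂ) • 1) ((2 * c)⁻¹ • 1)
        ((2⁻¹ : ℂ) • 1) (-((2 * c)⁻¹ • 1)) = 1 := by
      subst hX
      simp [Matrix.fromBlocks_multiply, Matrix.smul_mul, Matrix.mul_smul, smul_smul,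
        ← Matrix.fromBlocks_one]
      refine ⟨by module, ?_⟩
      rw [show c⁻¹ * 2⁻¹ * c = (2⁻¹ : ℂ) from by field_simp]
      module
    have := invertibleOfRightInverse _ _ h1
    exact isUnit_of_invertible X
  · subst hM hMbar hX
    simp [Matrix.fromBlocks_multiply, Matrix.smul_mul, Matrix.mul_smul, smul_smul,
      Matrix.mul_add, Matrix.mul_sub, Matrix.add_mul, Matrix.sub_mul]
    have e1 : 1 / (σ:ℂ) * c = Complex.I / (Real.sqrt σ : ℂ) := by
      rw [hc]; field_simp; rw [← hsq]; ring
    have e2 : c * (Complex.I / (Real.sqrt σ : ℂ)) = -1 := by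
      rw [hc]; field_simp; ring_nf; simp [Complex.I_sq]
    have e1' : c * (σ:ℂ)⁻¹ = Complex.I / (Real.sqrt σ : ℂ) := by rw [← e1]; ring
    refine ⟨by rw [e1'], by rw [e1']; module, by rw [e2]; module, ?_⟩
    rw [smul_sub, smul_smul, e2]
    module
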